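/- Let (p_n) be a sequence of real numbers with p_n/n → α ∈ (0,2π)\πℚ, let Q be a positive integer, and let [a,b] ⊂ ℝ be compact. Then for every i ∈ {0,1,2}, lim_{n→∞} sup_{s,t∈[a,b]} sup{ |K_n^{(i)}( (p+q)p_n + (pt+qs) )| : p, q ∈ ℤ, |p| ≤ Q, |q| ≤ Q, p ≠ −q } = 0. -/

import Mathlib

open Filter Set

noncomputable section

/-- `K_n` and its first two derivatives: `K_n(x) = (1/n) Σ_{k=1}^n e^{ikx/n}`,
`K_n'(x) = (i/n) Σ (k/n) e^{ikx/n}`, `K_n''(x) = −(1/n) Σ (k/n)² e^{ikx/n}`. -/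
def Knd : ℕ → ℕ → ℝ → ℂ
  | 0, n, x => (1 / (n:ℂ)) * ∑ k ∈ Finset.Icc 1 n, Complex.exp (Complex.I * k * x / n)
  | 1, n, x => (Complex.I / (n:ℂ)) * ∑ k ∈ Finset.Icc 1 n,
      (((k:ℝ) / n : ℝ) : ℂ) * Complex.exp (Complex.I * k * x / n)
  | _, n, x => -(1 / (n:ℂ)) * ∑ k ∈ Finset.Icc 1 n,
      (((k:ℝ) / n : ℝ) : ℂ)^2 * Complex.exp (Complex.I * k * x / n)

lemma aux_abel (r : ℂ) (hr : ‖r‖ ≤ 1) (a : ℕ → ℝ)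
    (h0 : ∀ k, 0 ≤ a k) (hm : Monotone a) (n : ℕ) :
    ‖((1 - r) * (∑ k ∈ Finset.Icc 1 n, ((a k : ℂ)) * r ^ k)
      + (a n : ℂ) * r ^ (n + 1))‖ ≤ a n := by
  induction n with
  | zero =>
      simp only [show Finset.Icc 1 0 = (∅ : Finset ℕ) by decide, Finset.sum_empty, mul_zero,
        zero_add, norm_mul, Complex.norm_real, Real.norm_eq_abs, abs_of_nonneg (h0 0)]
      calc a 0 * ‖(r ^ 1)‖ ≤ a 0 * 1 := by
            refine mul_le_mul_of_nonneg_left ?_ (h0 0)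
            simpa using hr
        _ = a 0 := mul_one _
  | succ n ih =>
      have hsum := Finset.sum_Icc_succ_top (Nat.succ_le_succ (Nat.zero_le n))
        (fun k => ((a k : ℂ)) * r ^ k)
      have hre : (1 - r) * (∑ k ∈ Finset.Icc 1 (n+1), ((a k : ℂ)) * r ^ k)
          + (a (n+1) : ℂ) * r ^ (n + 2)
          = ((1 - r) * (∑ k ∈ Finset.Icc 1 n, ((a k : ℂ)) * r ^ k)
              + (a n : ℂ) * r ^ (n + 1))
            + ((a (n+1) - a n : ℝ) : ℂ) * r ^ (n+1) := by
        rw [hsum]; push_cast; ring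
      rw [show n + 1 + 1 = n + 2 from rfl, hre]
      calc ‖_‖ ≤ ‖((1 - r) * (∑ k ∈ Finset.Icc 1 n, ((a k : ℂ)) * r ^ k)
              + (a n : ℂ) * r ^ (n + 1))‖ + ‖(((a (n+1) - a n : ℝ) : ℂ) * r ^ (n+1))‖ :=
            norm_add_le _ _
        _ ≤ a n + (a (n+1) - a n) * 1 := by
            refine add_le_add ih ?_
            rw [norm_mul, Complex.norm_real, Real.norm_eq_abs, abs_of_nonneg (sub_nonneg.2 (hm (Nat.le_succ n)))]
            refine mul_le_mul_of_nonneg_left ?_ (sub_nonneg.2 (hm (Nat.le_succ n)))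
            simpa using pow_le_one₀ (norm_nonneg r) hr
        _ = a (n+1) := by ring

lemma sum_est (n : ℕ) (hn : 1 ≤ n) (i : ℕ) (x : ℝ) (δ : ℝ) (hδ : 0 < δ)
    (hlb : δ ≤ ‖(1 - Complex.exp (Complex.I * ((x / n : ℝ) : ℂ)))‖) :
    ‖(∑ k ∈ Finset.Icc 1 n,
        (((((k:ℝ)/n)^i : ℝ)) : ℂ) * Complex.exp (Complex.I * k * x / n))‖ ≤ 2 / δ := by
  have hn0 : (0:ℝ) < n := by exact_mod_cast hn
  set r : ℂ := Complex.exp (Complex.I * ((x / n : ℝ) : ℂ)) with hrdef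
  have habs_r : ‖r‖ = 1 := by
    rw [hrdef, Complex.norm_exp]
    simp
  have hterm : ∀ k : ℕ, Complex.exp (Complex.I * k * x / n) = r ^ k := by
    intro k
    rw [hrdef, ← Complex.exp_nat_mul]
    congr 1
    push_cast
    ring
  set a : ℕ → ℝ := fun k => ((k:ℝ)/n)^i with hadef
  have h0 : ∀ k, 0 ≤ a k := fun k => pow_nonneg (div_nonneg (Nat.cast_nonneg k) hn0.le) i
  have hm : Monotone a := by
    intro k l hkl
    have hkl' : (k:ℝ) ≤ l := by exact_mod_cast hkl
    have h1 : ((k:ℝ)/n) ≤ ((l:ℝ)/n) := by gcongr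
    exact pow_le_pow_left₀ (div_nonneg (Nat.cast_nonneg k) hn0.le) h1 i
  have han : a n = 1 := by
    simp [hadef, div_self hn0.ne']
  have key := aux_abel r habs_r.le a h0 hm n
  have h2 : ‖((1 - r) * (∑ k ∈ Finset.Icc 1 n, ((a k : ℂ)) * r ^ k))‖ ≤ 2 := by
    have h3 : ‖((1 - r) * (∑ k ∈ Finset.Icc 1 n, ((a k : ℂ)) * r ^ k))‖
        ≤ ‖((1 - r) * (∑ k ∈ Finset.Icc 1 n, ((a k : ℂ)) * r ^ k)
            + (a n : ℂ) * r ^ (n + 1))‖ + ‖((a n : ℂ) * r ^ (n + 1))‖ := by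
      have := norm_add_le ((1 - r) * (∑ k ∈ Finset.Icc 1 n, ((a k : ℂ)) * r ^ k)
            + (a n : ℂ) * r ^ (n + 1)) (-((a n : ℂ) * r ^ (n + 1)))
      simpa using this
    have h4 : ‖((a n : ℂ) * r ^ (n + 1))‖ = 1 := by
      rw [norm_mul, norm_pow, habs_r, one_pow, mul_one, han]
      simp
    linarith [key, han]
  have hsum_eq : (∑ k ∈ Finset.Icc 1 n,
      (((((k:ℝ)/n)^i : ℝ)) : ℂ) * Complex.exp (Complex.I * k * x / n))
      = ∑ k ∈ Finset.Icc 1 n, ((a k : ℂ)) * r ^ k := by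
    refine Finset.sum_congr rfl fun k _ => ?_
    rw [hterm k, hadef]
  rw [hsum_eq]
  rw [norm_mul] at h2
  rw [le_div_iff₀ hδ]
  calc ‖(∑ k ∈ Finset.Icc 1 n, ((a k : ℂ)) * r ^ k)‖ * δ
      ≤ ‖(∑ k ∈ Finset.Icc 1 n, ((a k : ℂ)) * r ^ k)‖
          * ‖(1 - r)‖ := mul_le_mul_of_nonneg_left hlb (norm_nonneg _)
    _ = ‖(1 - r)‖ * ‖(∑ k ∈ Finset.Icc 1 n, ((a k : ℂ)) * r ^ k)‖ :=
        mul_comm _ _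
    _ ≤ 2 := h2

lemma knd_bound (i n : ℕ) (hn : 1 ≤ n) (x : ℝ) (δ : ℝ) (hδ : 0 < δ)
    (hlb : δ ≤ ‖(1 - Complex.exp (Complex.I * ((x / n : ℝ) : ℂ)))‖) :
    ‖(Knd i n x)‖ ≤ 2 / (δ * n) := by
  have hn0 : (0:ℝ) < n := by exact_mod_cast hn
  have hfrac : 2 / (δ * n) = (1/n) * (2/δ) := by field_simp
  rw [hfrac]
  match i with
  | 0 =>
      have he : Knd 0 n x = (1 / (n:ℂ)) * ∑ k ∈ Finset.Icc 1 n,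
          (((((k:ℝ)/n)^0 : ℝ)) : ℂ) * Complex.exp (Complex.I * k * x / n) := by
        simp [Knd]
      rw [he, norm_mul]
      have h1 : ‖(1 / (n:ℂ))‖ = 1/n := by
        simp [norm_div, Complex.norm_natCast]
      rw [h1]
      exact mul_le_mul_of_nonneg_left (sum_est n hn 0 x δ hδ hlb) (by positivity)
  | 1 =>
      have he : Knd 1 n x = (Complex.I / (n:ℂ)) * ∑ k ∈ Finset.Icc 1 n,
          (((((k:ℝ)/n)^1 : ℝ)) : ℂ) * Complex.exp (Complex.I * k * x / n) := by
        simp [Knd]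
      rw [he, norm_mul]
      have h1 : ‖(Complex.I / (n:ℂ))‖ = 1/n := by
        simp [norm_div, Complex.norm_natCast]
      rw [h1]
      exact mul_le_mul_of_nonneg_left (sum_est n hn 1 x δ hδ hlb) (by positivity)
  | (j+2) =>
      have he : Knd (j+2) n x = -(1 / (n:ℂ)) * ∑ k ∈ Finset.Icc 1 n,
          (((((k:ℝ)/n)^2 : ℝ)) : ℂ) * Complex.exp (Complex.I * k * x / n) := by
        simp only [Knd]
        congr 1
        refine Finset.sum_congr rfl fun k _ => ?_
        congr 1
        push_cast
        ring
      rw [he, norm_mul]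
      have h1 : ‖(-(1 / (n:ℂ)))‖ = 1/n := by
        simp [norm_div, Complex.norm_natCast]
      rw [h1]
      exact mul_le_mul_of_nonneg_left (sum_est n hn 2 x δ hδ hlb) (by positivity)

lemma exp_ne_one (α : ℝ) (hirr : ∀ q : ℚ, α ≠ Real.pi * q) (m : ℤ) (hm : m ≠ 0) :
    Complex.exp (Complex.I * (((m:ℝ) * α : ℝ) : ℂ)) ≠ 1 := by
  intro h
  obtain ⟨k, hk⟩ := Complex.exp_eq_one_iff.mp h
  have him : (m:ℝ) * α = k * (2 * Real.pi) := by
    have := congrArg Complex.im hk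
    simpa using this
  have hm0 : (m:ℝ) ≠ 0 := Int.cast_ne_zero.mpr hm
  apply hirr ((2 * k : ℚ) / m)
  push_cast
  field_simp
  linarith [him]

lemma near_bound (θ θ₀ η : ℝ) (hη1 : η ≤ 1) (hd : |θ - θ₀| ≤ η) :
    ‖(1 - Complex.exp (Complex.I * (θ₀:ℂ)))‖ - 2 * η
      ≤ ‖(1 - Complex.exp (Complex.I * (θ:ℂ)))‖ := by
  have habs0 : ‖(Complex.exp (Complex.I * (θ₀:ℂ)))‖ = 1 := by
    rw [Complex.norm_exp]; simp
  have hdiff : ‖(Complex.exp (Complex.I * (θ₀:ℂ)) - Complex.exp (Complex.I * (θ:ℂ)))‖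
      ≤ 2 * η := by
    have hfact : Complex.exp (Complex.I * (θ₀:ℂ)) - Complex.exp (Complex.I * (θ:ℂ))
        = Complex.exp (Complex.I * (θ:ℂ)) * (Complex.exp (Complex.I * ((θ₀ - θ : ℝ) : ℂ)) - 1) := by
      rw [mul_sub, ← Complex.exp_add, mul_one]
      push_cast
      ring_nf
    rw [hfact, norm_mul]
    have habs1 : ‖(Complex.exp (Complex.I * (θ:ℂ)))‖ = 1 := by
      rw [Complex.norm_exp]; simp
    rw [habs1, one_mul]
    have hsmall : ‖(Complex.I * ((θ₀ - θ : ℝ) : ℂ))‖ ≤ 1 := by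
      rw [norm_mul, Complex.norm_I, one_mul, Complex.norm_real, Real.norm_eq_abs]
      rw [abs_sub_comm] at hd
      linarith
    calc ‖(Complex.exp (Complex.I * ((θ₀ - θ : ℝ) : ℂ)) - 1)‖
        ≤ 2 * ‖(Complex.I * ((θ₀ - θ : ℝ) : ℂ))‖ := Complex.norm_exp_sub_one_le hsmall
      _ ≤ 2 * η := by
          rw [norm_mul, Complex.norm_I, one_mul, Complex.norm_real, Real.norm_eq_abs]
          rw [abs_sub_comm] at hd
          linarith
  have htri : ‖(1 - Complex.exp (Complex.I * (θ₀:ℂ)))‖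
      ≤ ‖(1 - Complex.exp (Complex.I * (θ:ℂ)))‖
        + ‖(Complex.exp (Complex.I * (θ:ℂ)) - Complex.exp (Complex.I * (θ₀:ℂ)))‖ := by
    have := norm_add_le (1 - Complex.exp (Complex.I * (θ:ℂ)))
      (Complex.exp (Complex.I * (θ:ℂ)) - Complex.exp (Complex.I * (θ₀:ℂ)))
    simpa using this
  rw [norm_sub_rev] at hdiff
  linarith [htri, hdiff]

set_option maxHeartbeats 1000000 in
theorem statement16
    (α : ℝ) (hα : α ∈ Set.Ioo 0 (2 * Real.pi)) (hirr : ∀ q : ℚ, α ≠ Real.pi * q)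
    (p : ℕ → ℝ) (hp : Tendsto (fun n : ℕ => p n / n) atTop (nhds α))
    (Q : ℕ) (hQ : 1 ≤ Q) (a b : ℝ) (hab : a ≤ b) :
    ∀ i : ℕ, i ≤ 2 → ∀ ε : ℝ, 0 < ε → ∃ N : ℕ, ∀ n ≥ N,
      ∀ s ∈ Set.Icc a b, ∀ t ∈ Set.Icc a b, ∀ pp q : ℤ,
        |pp| ≤ (Q : ℤ) → |q| ≤ (Q : ℤ) → pp ≠ -q →
        ‖(Knd i n (((pp : ℝ) + (q : ℝ)) * p n + ((pp : ℝ) * t + (q : ℝ) * s)))‖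
          < ε := by
  intro i hi ε hε
  set F : ℝ → ℝ := fun θ => ‖(1 - Complex.exp (Complex.I * (θ:ℂ)))‖ with hF
  set S : Finset ℤ := (Finset.Icc (-(2*Q:ℤ)) (2*Q)).erase 0 with hSdef
  have hone : (1:ℤ) ∈ S := by
    simp only [hSdef, Finset.mem_erase, Finset.mem_Icc]
    omega
  have hS : S.Nonempty := ⟨1, hone⟩
  have hFpos : ∀ m ∈ S, 0 < F ((m:ℝ) * α) := by
    intro m hmS
    have hm0 : m ≠ 0 := (Finset.mem_erase.mp hmS).1
    have hne := exp_ne_one α hirr m hm0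
    exact norm_pos_iff.mpr (sub_ne_zero.mpr (Ne.symm hne))
  set δ := S.inf' hS (fun m => F ((m:ℝ) * α)) with hδdef
  have hδ : 0 < δ := (Finset.lt_inf'_iff hS).mpr hFpos
  set η := min 1 (δ/4) with hηdef
  have hη : 0 < η := lt_min one_pos (by positivity)
  have hη1 : η ≤ 1 := min_le_left _ _
  have hηδ : 2*η ≤ δ/2 := by
    have := min_le_right 1 (δ/4); linarith
  set C := 2*(Q:ℝ)*(|a|+|b|) with hCdef
  have hC0 : 0 ≤ C := by positivity
  have hQ0 : (0:ℝ) < Q := by exact_mod_cast hQ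
  obtain ⟨N1, hN1⟩ := Metric.tendsto_atTop.mp hp (η/(4*Q)) (by positivity)
  obtain ⟨N2, hN2⟩ := exists_nat_gt (max (2*C/η) (4/(δ*ε)))
  refine ⟨max N1 N2, ?_⟩
  intro n hn s hs t ht pp q hppQ hqQ hpq
  have hnN1 : N1 ≤ n := le_trans (le_max_left _ _) hn
  have hnN2 : (N2:ℝ) ≤ n := by exact_mod_cast le_trans (le_max_right _ _) hn
  have hnR : max (2*C/η) (4/(δ*ε)) < (n:ℝ) := lt_of_lt_of_le hN2 hnN2
  have hn0R : (0:ℝ) < n := by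
    have h1 : (0:ℝ) ≤ 2*C/η := by positivity
    have h2 : 2*C/η < (n:ℝ) := lt_of_le_of_lt (le_max_left _ _) hnR
    linarith
  have hn1 : 1 ≤ n := by exact_mod_cast Nat.succ_le_of_lt (by exact_mod_cast hn0R)
  set m : ℤ := pp + q with hmdef
  have hm0 : m ≠ 0 := by
    intro h; apply hpq; omega
  rw [abs_le] at hppQ hqQ
  have hmS : m ∈ S := by
    simp only [hSdef, Finset.mem_erase, Finset.mem_Icc]
    refine ⟨hm0, by omega, by omega⟩
  set x := ((pp:ℝ) + (q:ℝ)) * p n + ((pp:ℝ) * t + (q:ℝ) * s) with hxdef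
  have hmcast : ((pp:ℝ) + (q:ℝ)) = (m:ℝ) := by rw [hmdef]; push_cast; ring
  have hmabs : |(m:ℝ)| ≤ 2*(Q:ℝ) := by
    rw [← Int.cast_abs]
    have : |m| ≤ 2*(Q:ℤ) := by rw [hmdef, abs_le]; omega
    exact_mod_cast this
  have hdist := hN1 n hnN1
  rw [Real.dist_eq] at hdist
  have htb : |t| ≤ |a|+|b| := by
    rw [abs_le]
    constructor
    · linarith [ht.1, neg_abs_le a, abs_nonneg b]
    · linarith [ht.2, le_abs_self b, abs_nonneg a]
  have hsb : |s| ≤ |a|+|b| := by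
    rw [abs_le]
    constructor
    · linarith [hs.1, neg_abs_le a, abs_nonneg b]
    · linarith [hs.2, le_abs_self b, abs_nonneg a]
  have hppc : |(pp:ℝ)| ≤ (Q:ℝ) := by
    rw [abs_le]; constructor <;> [exact_mod_cast hppQ.1; exact_mod_cast hppQ.2]
  have hqc : |(q:ℝ)| ≤ (Q:ℝ) := by
    rw [abs_le]; constructor <;> [exact_mod_cast hqQ.1; exact_mod_cast hqQ.2]
  have hcb : |(pp:ℝ) * t + (q:ℝ) * s| ≤ C := by
    calc |(pp:ℝ) * t + (q:ℝ) * s| ≤ |(pp:ℝ)| * |t| + |(q:ℝ)| * |s| := by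
          rw [← abs_mul, ← abs_mul]; exact abs_add_le _ _
      _ ≤ (Q:ℝ)*(|a|+|b|) + (Q:ℝ)*(|a|+|b|) := by
          gcongr <;> positivity
      _ = C := by rw [hCdef]; ring
  have heq : x/(n:ℝ) - (m:ℝ)*α = (m:ℝ)*(p n/(n:ℝ) - α) + ((pp:ℝ) * t + (q:ℝ) * s)/(n:ℝ) := by
    rw [hxdef, hmcast]
    field_simp
    ring
  have hθ : |x/(n:ℝ) - (m:ℝ)*α| ≤ η := by
    rw [heq]
    have hCn : C/(n:ℝ) ≤ η/2 := by
      rw [div_le_iff₀ hn0R]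
      have h2 : 2*C/η < (n:ℝ) := lt_of_le_of_lt (le_max_left _ _) hnR
      rw [div_lt_iff₀ hη] at h2
      nlinarith
    calc |(m:ℝ)*(p n/(n:ℝ) - α) + ((pp:ℝ) * t + (q:ℝ) * s)/(n:ℝ)|
        ≤ |(m:ℝ) * (p n/(n:ℝ) - α)| + |((pp:ℝ) * t + (q:ℝ) * s)/(n:ℝ)| := abs_add_le _ _
      _ = |(m:ℝ)| * |p n/(n:ℝ) - α| + |(pp:ℝ) * t + (q:ℝ) * s|/(n:ℝ) := by
          rw [abs_mul, abs_div, abs_of_pos hn0R]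
      _ ≤ (2*(Q:ℝ))*(η/(4*(Q:ℝ))) + C/(n:ℝ) := by
          refine add_le_add (mul_le_mul hmabs hdist.le (abs_nonneg _) (by positivity)) ?_
          gcongr
      _ ≤ η/2 + η/2 := by
          refine add_le_add ?_ hCn
          rw [mul_div_assoc']
          rw [div_le_iff₀ (by positivity)]
          ring_nf
          nlinarith
      _ = η := by ring
  have hlow : δ/2 ≤ ‖(1 - Complex.exp (Complex.I * ((x/(n:ℝ) : ℝ) : ℂ)))‖ := by
    have hnb := near_bound (x/(n:ℝ)) ((m:ℝ)*α) η hη1 hθ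
    have hinf : δ ≤ F ((m:ℝ)*α) := Finset.inf'_le _ hmS
    simp only [hF] at hinf hnb ⊢
    linarith
  have hb := knd_bound i n hn1 x (δ/2) (by positivity) hlow
  have hfin : 2/((δ/2)*(n:ℝ)) < ε := by
    rw [div_lt_iff₀ (by positivity)]
    have h4 : 4/(δ*ε) < (n:ℝ) := lt_of_le_of_lt (le_max_right _ _) hnR
    rw [div_lt_iff₀ (by positivity)] at h4
    nlinarith
  exact lt_of_le_of_lt hb hfin

end
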